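/- arXiv:2507.22743 — 4 statements merged into one kernel-verified Lean document; each statement's English description precedes it below -/
import Mathlib

section
/- Lagrange inversion formula: if f is a regular formal power series over ℂ (zero constant term, nonzero linear coefficient) with compositional inverse f⁻¹, then for every positive integer n, the coefficient of x^n in f⁻¹ equals (1/n) times the coefficient of x^{n-1} in (x/f(x))^n. -/
/-- Composition of formal power series: `comp f g = f ∘ g`, intended for `g` with zero
constant coefficient. -/
noncomputable def PowerSeries.comp {R : Type*} [CommRing R] (f g : PowerSeries R) :
    PowerSeries R :=
  PowerSeries.mk fun n =>
    ∑ k ∈ Finset.range (n + 1), PowerSeries.coeff k f * PowerSeries.coeff n (g ^ k)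

open PowerSeries


lemma aux_res0 (u : PowerSeries ℂ) (hu : constantCoeff u ≠ 0) :
    coeff 0 (d⁄dX ℂ (X * u) * u⁻¹) = 1 := by
  rw [Derivation.leibniz, derivative_X, smul_eq_mul, smul_eq_mul, mul_one, add_mul,
    mul_assoc, PowerSeries.mul_inv_cancel u hu, map_add]
  simp [coeff_zero_eq_constantCoeff, map_mul]

lemma aux_residue (u : PowerSeries ℂ) (hu : constantCoeff u ≠ 0) (m : ℕ) (hm : 1 ≤ m) :
    coeff m (d⁄dX ℂ (X * u) * (u⁻¹) ^ (m + 1)) = 0 := by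
  obtain ⟨m', rfl⟩ : ∃ m', m = m' + 1 := ⟨m - 1, by omega⟩
  have hD : d⁄dX ℂ ((u⁻¹) ^ (m' + 1)) = (-((m' : ℂ) + 1)) • ((u⁻¹) ^ (m' + 2) * d⁄dX ℂ u) := by
    rw [Derivation.leibniz_pow, derivative_inv']
    simp only [nsmul_eq_mul, smul_eq_mul, PowerSeries.smul_eq_C_mul, map_neg, map_add,
      map_natCast, map_one, Nat.add_sub_cancel]
    push_cast
    ring
  have hcoeffD := congrArg (coeff m') hD
  rw [coeff_derivative, map_smul, smul_eq_mul] at hcoeffD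
  have hsplit : d⁄dX ℂ (X * u) * (u⁻¹) ^ (m' + 1 + 1)
      = X * (d⁄dX ℂ u * (u⁻¹) ^ (m' + 2)) + (u⁻¹) ^ (m' + 1) := by
    rw [Derivation.leibniz, derivative_X, smul_eq_mul, smul_eq_mul, mul_one]
    have h2 : u * (u⁻¹) ^ (m' + 1 + 1) = (u * u⁻¹) * (u⁻¹) ^ (m' + 1) := by ring
    rw [add_mul, mul_assoc, h2, PowerSeries.mul_inv_cancel u hu, one_mul]
  rw [hsplit, map_add, coeff_succ_X_mul]
  have hmne : ((m' : ℂ) + 1) ≠ 0 := by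
    have : ((m' + 1 : ℕ) : ℂ) ≠ 0 := Nat.cast_ne_zero.mpr (Nat.succ_ne_zero m')
    push_cast at this; exact this
  have hkey : coeff m' (d⁄dX ℂ u * (u⁻¹) ^ (m' + 2)) = -coeff (m' + 1) ((u⁻¹) ^ (m' + 1)) := by
    rw [mul_comm]
    apply mul_left_cancel₀ hmne
    linear_combination hcoeffD
  rw [hkey]; ring

theorem stmt_1 (f fi : PowerSeries ℂ)
    (h0 : PowerSeries.coeff 0 f = 0) (h1 : PowerSeries.coeff 1 f ≠ 0)
    (hfi : f.comp fi = PowerSeries.X ∧ fi.comp f = PowerSeries.X)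
    (n : ℕ) (hn : 0 < n) :
    PowerSeries.coeff n fi =
      (1 / (n : ℂ)) *
        PowerSeries.coeff (n - 1)
          ((PowerSeries.mk fun m => PowerSeries.coeff (m + 1) f)⁻¹ ^ n) := by
  set u : PowerSeries ℂ := PowerSeries.mk fun m => PowerSeries.coeff (m + 1) f with hu_def
  have hu0 : constantCoeff u ≠ 0 := by
    simpa [hu_def, ← coeff_zero_eq_constantCoeff_apply] using h1
  have hfu : f = X * u := by
    ext N
    cases N with
    | zero => simpa using h0
    | succ N => simp [coeff_succ_X_mul, hu_def]
  -- coefficients of the inverse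
  set b : ℕ → ℂ := fun k => coeff k fi with hb_def
  -- composition identity, coefficientwise
  have hcomp : ∀ N : ℕ, ∑ k ∈ Finset.range (N + 1), b k * coeff N (f ^ k) = coeff N X := by
    intro N
    have := congrArg (coeff N) hfi.2
    simpa [PowerSeries.comp, coeff_mk] using this
  -- vanishing of high coefficients of powers of f
  have hpow0 : ∀ j N : ℕ, N < j → coeff N (f ^ j) = 0 := by
    intro j N hNj
    rw [hfu, mul_pow, coeff_X_pow_mul', if_neg (by omega)]
  -- the finite partial sum playing the role of `(fi' ∘ f) * f'`
  set T : PowerSeries ℂ :=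
    ∑ k ∈ Finset.range n, (((k : ℂ) + 1) * b (k + 1)) • (f ^ k * d⁄dX ℂ f) with hT_def
  -- T agrees with 1 up to order n
  have hT : ∀ N : ℕ, N < n → coeff N T = if N = 0 then 1 else 0 := by
    intro N hN
    have hterm2 : ∀ k ∈ Finset.range n,
        coeff N ((((k : ℂ) + 1) * b (k + 1)) • (f ^ k * d⁄dX ℂ f))
          = ((N : ℂ) + 1) * (b (k + 1) * coeff (N + 1) (f ^ (k + 1))) := by
      intro k _
      rw [map_smul, smul_eq_mul]
      have hD0 : d⁄dX ℂ (f ^ (k + 1)) = ((k : ℂ) + 1) • (f ^ k * d⁄dX ℂ f) := by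
        rw [Derivation.leibniz_pow, Nat.add_sub_cancel]
        simp only [smul_eq_mul, ← Nat.cast_smul_eq_nsmul ℂ]
        norm_cast
      have hD := congrArg (coeff N) hD0
      rw [coeff_derivative, map_smul, smul_eq_mul] at hD
      linear_combination (-(b (k + 1))) * hD
    rw [hT_def, map_sum, Finset.sum_congr rfl hterm2, ← Finset.mul_sum]
    have hsum : ∑ k ∈ Finset.range n, b (k + 1) * coeff (N + 1) (f ^ (k + 1))
        = coeff (N + 1) X := by
      have e0 : ∑ k ∈ Finset.range (n + 1), b k * coeff (N + 1) (f ^ k)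
          = ∑ k ∈ Finset.range n, b (k + 1) * coeff (N + 1) (f ^ (k + 1)) := by
        rw [Finset.sum_range_succ']
        simp [coeff_one]
      have e1 : ∑ k ∈ Finset.range (N + 2), b k * coeff (N + 1) (f ^ k)
          = ∑ k ∈ Finset.range (n + 1), b k * coeff (N + 1) (f ^ k) := by
        apply Finset.sum_subset
        · intro k hk
          simp only [Finset.mem_range] at hk ⊢
          omega
        · intro k _ hk2
          simp only [Finset.mem_range] at hk2
          rw [hpow0 k (N + 1) (by omega), mul_zero]
      rw [← e0, ← e1, hcomp (N + 1)]
    rw [hsum, coeff_X]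
    rcases eq_or_ne N 0 with rfl | hN0
    · norm_num
    · rw [if_neg (by omega), if_neg hN0, mul_zero]
  have hdvd : (X : PowerSeries ℂ) ^ n ∣ (T - 1) := by
    rw [X_pow_dvd_iff]
    intro N hN
    rw [map_sub, hT N hN, coeff_one, sub_self]
  -- hence coeff (n-1) (T * v) = coeff (n-1) v for v = (u⁻¹)^n
  have hmulT : coeff (n - 1) (T * (u⁻¹) ^ n) = coeff (n - 1) ((u⁻¹) ^ n) := by
    obtain ⟨S, hS⟩ := hdvd
    have : T * (u⁻¹) ^ n = (u⁻¹) ^ n + X ^ n * (S * (u⁻¹) ^ n) := by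
      have : T = 1 + X ^ n * S := by linear_combination hS
      rw [this]; ring
    rw [this, map_add, coeff_X_pow_mul', if_neg (by omega), add_zero]
  -- compute coeff (n-1) (T * (u⁻¹)^n) directly
  have hterm : ∀ k, k < n → f ^ k * d⁄dX ℂ f * (u⁻¹) ^ n
      = X ^ k * (d⁄dX ℂ (X * u) * (u⁻¹) ^ (n - k)) := by
    intro k hk
    obtain ⟨d, rfl⟩ : ∃ d, n = k + d + 1 := ⟨n - k - 1, by omega⟩
    have h1 : k + d + 1 - k = d + 1 := by omega
    have h2 : (u⁻¹) ^ (k + d + 1) = (u⁻¹) ^ k * (u⁻¹) ^ (d + 1) := by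
      rw [add_assoc, pow_add]
    rw [h1]
    calc f ^ k * d⁄dX ℂ f * (u⁻¹) ^ (k + d + 1)
        = (u * u⁻¹) ^ k * (X ^ k * (d⁄dX ℂ (X * u) * (u⁻¹) ^ (d + 1))) := by
          rw [h2, mul_pow, hfu, mul_pow]; ring
      _ = X ^ k * (d⁄dX ℂ (X * u) * (u⁻¹) ^ (d + 1)) := by
          rw [PowerSeries.mul_inv_cancel u hu0, one_pow, one_mul]
  have hmain : coeff (n - 1) (T * (u⁻¹) ^ n) = (n : ℂ) * b n := by
    rw [hT_def, Finset.sum_mul]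
    simp only [smul_mul_assoc]
    rw [map_sum]
    rw [Finset.sum_eq_single (n - 1)]
    · rw [map_smul, smul_eq_mul]
      have hk : n - 1 < n := by omega
      rw [hterm (n - 1) hk]
      obtain ⟨d, rfl⟩ : ∃ d, n = d + 1 := ⟨n - 1, by omega⟩
      simp only [Nat.add_sub_cancel]
      have : d + 1 - d = 1 := by omega
      rw [this, pow_one]
      have hco : coeff d ((X : PowerSeries ℂ) ^ d * (d⁄dX ℂ (X * u) * u⁻¹)) = 1 := by
        have := coeff_X_pow_mul (d⁄dX ℂ (X * u) * u⁻¹) d 0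
        rw [zero_add] at this
        rw [this, aux_res0 u hu0]
      rw [hco, mul_one]
      push_cast
      ring
    · intro k hk hkne
      simp only [Finset.mem_range] at hk
      rw [map_smul, smul_eq_mul, hterm k hk]
      obtain ⟨d, hd⟩ : ∃ d, n = k + d + 1 + 1 := ⟨n - k - 2, by omega⟩
      have h3 : n - 1 = (d + 1) + k := by omega
      have h4 : n - k = (d + 1) + 1 := by omega
      rw [h3, h4, coeff_X_pow_mul, aux_residue u hu0 (d + 1) (by omega), mul_zero]
    · intro h
      exact absurd (Finset.mem_range.mpr (by omega)) h
  have hne : (n : ℂ) ≠ 0 := Nat.cast_ne_zero.mpr hn.ne'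
  have key : coeff (n - 1) ((u⁻¹) ^ n) = (n : ℂ) * b n := hmulT.symm.trans hmain
  rw [key, hb_def]
  field_simp
end

section
/- Let f and g be distinct regular formal power series over ℂ, both with linear coefficient 1. Then ord(f − g) = ord(g⁻¹ − f⁻¹) and the leading coefficient of f − g equals the leading coefficient of g⁻¹ − f⁻¹, where ord denotes the order (minimal degree with nonzero coefficient) and the leading coefficient of a nonzero series h is [x^{ord(h)}]h. -/
open PowerSeries Finset in
lemma coeff_comp' (a b : PowerSeries ℂ) (n : ℕ) :
    PowerSeries.coeff n (a.comp b)
      = ∑ j ∈ Finset.range (n+1), PowerSeries.coeff j a * PowerSeries.coeff n (b^j) := by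
  simp [PowerSeries.comp, PowerSeries.coeff_mk]

open PowerSeries in
lemma pow_coeff_zero' (f : PowerSeries ℂ) (hf0 : PowerSeries.coeff 0 f = 0) {n j : ℕ}
    (h : n < j) : PowerSeries.coeff n (f^j) = 0 := by
  have hd : (X : PowerSeries ℂ) ^ j ∣ f ^ j :=
    pow_dvd_pow_of_dvd (X_dvd_iff.mpr (by rwa [← coeff_zero_eq_constantCoeff])) j
  exact X_pow_dvd_iff.mp hd n h

open PowerSeries in
lemma pow_coeff_diag' (f : PowerSeries ℂ) (hf0 : PowerSeries.coeff 0 f = 0) (j : ℕ) :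
    PowerSeries.coeff j (f^j) = (PowerSeries.coeff 1 f)^j := by
  obtain ⟨F, hF⟩ := X_dvd_iff.mpr (show constantCoeff f = 0 by
    rwa [← coeff_zero_eq_constantCoeff])
  have h1 : PowerSeries.coeff 1 f = constantCoeff F := by
    rw [hF, ← coeff_zero_eq_constantCoeff]
    exact coeff_succ_X_mul 0 F
  have h2 := PowerSeries.coeff_X_pow_mul (F^j) j 0
  rw [zero_add] at h2
  calc PowerSeries.coeff j (f^j) = PowerSeries.coeff j ((X:PowerSeries ℂ)^j * F^j) := by
        rw [hF, mul_pow]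
    _ = PowerSeries.coeff 0 (F^j) := h2
    _ = (constantCoeff F)^j := by rw [coeff_zero_eq_constantCoeff, map_pow]
    _ = (PowerSeries.coeff 1 f)^j := by rw [h1]

open PowerSeries Finset in
lemma pow_sub_coeff' (f g : PowerSeries ℂ) (hf0 : PowerSeries.coeff 0 f = 0)
    (hg0 : PowerSeries.coeff 0 g = 0) {k : ℕ}
    (hk : ∀ i, i < k → PowerSeries.coeff i (f - g) = 0) {n j : ℕ} (hn : n ≤ k) (hj : 2 ≤ j) :
    PowerSeries.coeff n (f^j - g^j) = 0 := by
  rw [← geom_sum₂_mul f g j, PowerSeries.coeff_mul]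
  apply Finset.sum_eq_zero
  rintro ⟨a, b⟩ hab
  have hab : a + b = n := by simpa using hab
  by_cases hb : b < k
  · rw [hk b hb, mul_zero]
  · have ha : a = 0 := by omega
    subst ha
    have hS : PowerSeries.coeff 0 (∑ i ∈ Finset.range j, f^i * g^(j-1-i)) = 0 := by
      rw [map_sum]
      apply Finset.sum_eq_zero
      intro i hi
      rw [Finset.mem_range] at hi
      rw [coeff_zero_eq_constantCoeff, map_mul, map_pow, map_pow]
      simp only [PowerSeries.coeff_zero_eq_constantCoeff] at hf0 hg0
      rw [hf0, hg0]
      rcases Nat.eq_zero_or_pos i with h0 | h0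
      · subst h0
        rw [zero_pow (by omega : j - 1 - 0 ≠ 0), mul_zero]
      · rw [zero_pow (by omega : i ≠ 0), zero_mul]
    rw [hS, zero_mul]

open PowerSeries Finset in
lemma comp_coeff_small' (h f : PowerSeries ℂ) {k n : ℕ}
    (hk : ∀ i, i < k → PowerSeries.coeff i h = 0) (hn : n < k) :
    PowerSeries.coeff n (h.comp f) = 0 := by
  rw [coeff_comp']
  apply Finset.sum_eq_zero
  intro j hj
  rw [Finset.mem_range] at hj
  rw [hk j (by omega), zero_mul]

open PowerSeries Finset in
lemma comp_coeff_lead' (h f : PowerSeries ℂ) (hf0 : PowerSeries.coeff 0 f = 0)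
    (hf1 : PowerSeries.coeff 1 f = 1) {k : ℕ}
    (hk : ∀ i, i < k → PowerSeries.coeff i h = 0) :
    PowerSeries.coeff k (h.comp f) = PowerSeries.coeff k h := by
  rw [coeff_comp', Finset.sum_eq_single k]
  · rw [pow_coeff_diag' f hf0, hf1, one_pow, mul_one]
  · intro j hj hjk
    rw [Finset.mem_range] at hj
    rw [hk j (by omega), zero_mul]
  · intro hmem
    exact absurd (Finset.self_mem_range_succ k) hmem

open PowerSeries Finset in
lemma comp_sub' (a b c : PowerSeries ℂ) (n : ℕ) :
    PowerSeries.coeff n ((a - b).comp c)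
      = PowerSeries.coeff n (a.comp c) - PowerSeries.coeff n (b.comp c) := by
  rw [coeff_comp', coeff_comp', coeff_comp', ← Finset.sum_sub_distrib]
  apply Finset.sum_congr rfl
  intro j _
  rw [map_sub, sub_mul]

theorem stmt_4 (f g fi gi : PowerSeries ℂ) (hne : f ≠ g)
    (hf0 : PowerSeries.coeff 0 f = 0) (hf1 : PowerSeries.coeff 1 f = 1)
    (hg0 : PowerSeries.coeff 0 g = 0) (hg1 : PowerSeries.coeff 1 g = 1)
    (hfi : f.comp fi = PowerSeries.X ∧ fi.comp f = PowerSeries.X)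
    (hgi : g.comp gi = PowerSeries.X ∧ gi.comp g = PowerSeries.X) :
    ∃ k : ℕ, (f - g).order = (k : ℕ∞) ∧ (gi - fi).order = (k : ℕ∞) ∧
      PowerSeries.coeff k (f - g) = PowerSeries.coeff k (gi - fi) := by
  classical
  obtain ⟨-, hfif⟩ := hfi
  obtain ⟨-, hgig⟩ := hgi
  have hfg : f - g ≠ 0 := sub_ne_zero.mpr hne
  -- get k = order (f - g)
  obtain ⟨k, hk⟩ := ENat.ne_top_iff_exists.mp
    ((PowerSeries.order_finite_iff_ne_zero.mpr hfg).ne)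
  rw [eq_comm] at hk
  obtain ⟨hkne, hklt⟩ := PowerSeries.order_eq_nat.mp hk
  -- coeff 1 gi = 1
  have hgi1 : PowerSeries.coeff 1 gi = 1 := by
    have := congrArg (PowerSeries.coeff 1) hgig
    rw [coeff_comp', PowerSeries.coeff_X] at this
    simp [Finset.sum_range_succ, pow_one, hg1] at this
    exact this
  -- Claim 1: for n ≤ k, coeff n (gi.comp f - X) = coeff n (f - g)
  have claim1 : ∀ n : ℕ, n ≤ k →
      PowerSeries.coeff n (gi.comp f) - PowerSeries.coeff n (gi.comp g)
        = PowerSeries.coeff n (f - g) := by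
    intro n hn
    rw [coeff_comp', coeff_comp', ← Finset.sum_sub_distrib]
    have hterm : ∀ j ∈ Finset.range (n+1),
        PowerSeries.coeff j gi * PowerSeries.coeff n (f^j)
          - PowerSeries.coeff j gi * PowerSeries.coeff n (g^j)
        = if j = 1 then PowerSeries.coeff n (f - g) else 0 := by
      intro j hj
      rw [← mul_sub, ← map_sub]
      rcases Nat.lt_or_ge j 2 with hj2 | hj2
      · interval_cases j
        · simp
        · rw [if_pos rfl, hgi1, one_mul, pow_one, pow_one]
      · rw [if_neg (by omega), pow_sub_coeff' f g hf0 hg0 hklt hn hj2, mul_zero]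
    rw [Finset.sum_congr rfl hterm, Finset.sum_ite_eq' (Finset.range (n+1)) 1
      (fun _ => PowerSeries.coeff n (f - g))]
    rcases Nat.eq_zero_or_pos n with hn0 | hn0
    · subst hn0
      rw [if_neg (by simp), map_sub, hf0, hg0, sub_zero]
    · rw [if_pos (Finset.mem_range.mpr (by omega))]
  -- A n = coeff n ((gi - fi).comp f) = coeff n (gi.comp f) - coeff n X
  have claim2 : ∀ n : ℕ, PowerSeries.coeff n ((gi - fi).comp f)
      = PowerSeries.coeff n (gi.comp f) - PowerSeries.coeff n (gi.comp g) := by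
    intro n
    rw [comp_sub', hfif, hgig]
  set h := gi - fi with hh
  -- h ≠ 0
  have hhne : h ≠ 0 := by
    intro h0
    have := claim2 k
    rw [h0] at this
    rw [claim1 k le_rfl] at this
    have hz : PowerSeries.coeff k ((0 : PowerSeries ℂ).comp f) = 0 := by
      rw [coeff_comp']
      simp
    rw [hz] at this
    exact hkne this.symm
  obtain ⟨k', hk'⟩ := ENat.ne_top_iff_exists.mp
    ((PowerSeries.order_finite_iff_ne_zero.mpr hhne).ne)
  rw [eq_comm] at hk'
  obtain ⟨hk'ne, hk'lt⟩ := PowerSeries.order_eq_nat.mp hk'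
  -- k' = k
  have hkk : k' = k := by
    rcases lt_trichotomy k' k with hlt | heq | hgt
    · exfalso
      have h1 := claim2 k'
      rw [claim1 k' hlt.le, comp_coeff_lead' h f hf0 hf1 hk'lt] at h1
      rw [hklt k' hlt] at h1
      exact hk'ne h1
    · exact heq
    · exfalso
      have h1 := claim2 k
      rw [claim1 k le_rfl, comp_coeff_small' h f hk'lt hgt] at h1
      exact hkne h1.symm
  subst hkk
  refine ⟨k', hk, hk', ?_⟩
  have h1 := claim2 k'
  rw [claim1 k' le_rfl, comp_coeff_lead' h f hf0 hf1 hk'lt] at h1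
  exact h1.symm
end

section
/- As x → 0, the real function (sin(tan x) − tan(sin x)) / (arcsin(arctan x) − arctan(arcsin x)) tends to 1. -/
open Real Filter Set

lemma analyticAt_csin (z : ℂ) : AnalyticAt ℂ Complex.sin z := by
  have : AnalyticAt ℂ (fun z : ℂ => (Complex.exp (-z * Complex.I) - Complex.exp (z * Complex.I)) * Complex.I / 2) z := by
    apply AnalyticAt.div
    · apply AnalyticAt.mul
      · exact (((analyticAt_id.neg.mul analyticAt_const).cexp).sub ((analyticAt_id.mul analyticAt_const).cexp))
      · exact analyticAt_const
    · exact analyticAt_const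
    · norm_num
  exact this.congr (by filter_upwards with z; rfl)

lemma analyticAt_rsin (x : ℝ) : AnalyticAt ℝ Real.sin x := by
  have h1 : AnalyticAt ℝ Complex.sin (Complex.ofRealCLM x) := (analyticAt_csin _).restrictScalars
  have h2 : AnalyticAt ℝ (Complex.sin ∘ Complex.ofRealCLM) x := h1.comp (Complex.ofRealCLM.analyticAt x)
  have h3 : AnalyticAt ℝ (Complex.reCLM ∘ Complex.sin ∘ Complex.ofRealCLM) x :=
    (Complex.reCLM.analyticAt _).comp h2
  exact h3.congr (by filter_upwards with y; simp [Function.comp, Complex.sin_ofReal_re])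

lemma analyticAt_ccos (z : ℂ) : AnalyticAt ℂ Complex.cos z := by
  have : AnalyticAt ℂ (fun z : ℂ => (Complex.exp (z * Complex.I) + Complex.exp (-z * Complex.I)) / 2) z := by
    apply AnalyticAt.div
    · exact ((analyticAt_id.mul analyticAt_const).cexp).add ((analyticAt_id.neg.mul analyticAt_const).cexp)
    · exact analyticAt_const
    · norm_num
  exact this.congr (by filter_upwards with z; rfl)

lemma analyticAt_rcos (x : ℝ) : AnalyticAt ℝ Real.cos x := by
  have h2 : AnalyticAt ℝ (Complex.cos ∘ Complex.ofRealCLM) x :=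
    ((analyticAt_ccos _).restrictScalars).comp (Complex.ofRealCLM.analyticAt x)
  exact ((Complex.reCLM.analyticAt _).comp h2).congr
    (by filter_upwards with y; simp [Function.comp, Complex.cos_ofReal_re])

lemma analyticAt_rtan {x : ℝ} (h : Real.cos x ≠ 0) : AnalyticAt ℝ Real.tan x := by
  have : AnalyticAt ℝ (fun x => Real.sin x / Real.cos x) x :=
    (analyticAt_rsin x).div (analyticAt_rcos x) h
  exact this.congr (by filter_upwards with y; rw [Real.tan_eq_sin_div_cos])

lemma cos_sin_ne (t : ℝ) : Real.cos (Real.sin t) ≠ 0 := by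
  have h := Real.neg_one_le_sin t
  have h2 := Real.sin_le_one t
  have hpi := Real.pi_gt_three
  exact ne_of_gt (Real.cos_pos_of_mem_Ioo ⟨by linarith, by linarith⟩)

noncomputable def Nf (x : ℝ) : ℝ := Real.sin (Real.tan x) - Real.tan (Real.sin x)

lemma analyticAt_Nf {x : ℝ} (hx : Real.cos x ≠ 0) : AnalyticAt ℝ Nf x :=
  ((analyticAt_rsin _).comp (analyticAt_rtan hx)).sub
    ((analyticAt_rtan (cos_sin_ne x)).comp (analyticAt_rsin x))

lemma sin_one_gt : Real.pi / 4 < Real.sin 1 := by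
  have hs : (15:ℝ)/32 < Real.sin (1/2) := by
    have := Real.sin_gt_sub_cube (x := 1/2) (by norm_num)
    nlinarith
  have hs4 : Real.sin (1/4) < 1/4 := Real.sin_lt (by norm_num)
  have hs4' : (0:ℝ) ≤ Real.sin (1/4) := Real.sin_nonneg_of_nonneg_of_le_pi (by norm_num)
    (by linarith [Real.pi_gt_three])
  have hc : (7:ℝ)/8 < Real.cos (1/2) := by
    have h2 : Real.cos (2 * (1/4)) = 1 - 2 * Real.sin (1/4) ^ 2 := by
      rw [Real.cos_two_mul']
      nlinarith [Real.sin_sq_add_cos_sq (1/4 : ℝ)]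
    norm_num at h2
    nlinarith
  have h1 : Real.sin 1 = 2 * Real.sin (1/2) * Real.cos (1/2) := by
    have := Real.sin_two_mul (1/2)
    norm_num at this; exact this
  have hpi := Real.pi_lt_d2
  nlinarith [Real.sin_le_one (1/2)]

lemma Nf_one_neg : Nf 1 < 0 := by
  have h1 : Real.sin 1 < Real.pi / 2 := by
    linarith [Real.sin_le_one 1, Real.pi_gt_three]
  have h2 : (1:ℝ) < Real.tan (Real.sin 1) := by
    have := Real.tan_lt_tan_of_lt_of_lt_pi_div_two (x := Real.pi/4) (y := Real.sin 1)
      (by linarith [Real.pi_pos]) h1 sin_one_gt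
    rwa [Real.tan_pi_div_four] at this
  have h3 : Real.sin (Real.tan 1) ≤ 1 := Real.sin_le_one _
  simp only [Nf]; linarith

lemma Nf_not_ev_zero : ¬ (∀ᶠ x in nhds (0:ℝ), Nf x = 0) := by
  intro h
  have hpi := Real.pi_gt_three
  have hU : AnalyticOnNhd ℝ Nf (Ioo (-(Real.pi/2)) (Real.pi/2)) := fun x hx =>
    analyticAt_Nf (ne_of_gt (Real.cos_pos_of_mem_Ioo hx))
  have heq : EqOn Nf 0 (Ioo (-(Real.pi/2)) (Real.pi/2)) :=
    hU.eqOn_zero_of_preconnected_of_eventuallyEq_zero isPreconnected_Ioo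
      (z₀ := 0) ⟨by linarith, by linarith⟩ h
  have := heq (x := 1) ⟨by linarith, by linarith⟩
  simpa [this] using Nf_one_neg

noncomputable def uf (x : ℝ) : ℝ := Real.arctan (Real.arcsin x)
noncomputable def vf (x : ℝ) : ℝ := Real.arcsin (Real.arctan x)
noncomputable def Gf (t : ℝ) : ℝ := Real.tan (Real.sin t)
noncomputable def Gf' (t : ℝ) : ℝ := 1 / Real.cos (Real.sin t) ^ 2 * Real.cos t

lemma hasDerivAt_Gf (t : ℝ) : HasDerivAt Gf (Gf' t) t :=
  (Real.hasDerivAt_tan (cos_sin_ne t)).comp t (Real.hasDerivAt_sin t)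

lemma contGf' : Continuous Gf' := by
  apply Continuous.mul _ Real.continuous_cos
  exact continuous_const.div ((Real.continuous_cos.comp Real.continuous_sin).pow 2)
    (fun t => pow_ne_zero 2 (cos_sin_ne t))

lemma Gf'_zero : Gf' 0 = 1 := by simp [Gf']

lemma uf_zero : uf 0 = 0 := by simp [uf]
lemma vf_zero : vf 0 = 0 := by simp [vf]

lemma cont_uf : Continuous uf := Real.continuous_arctan.comp Real.continuous_arcsin
lemma cont_vf : Continuous vf := Real.continuous_arcsin.comp Real.continuous_arctan

lemma uf_tendsto : Tendsto uf (nhds 0) (nhds 0) := by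
  simpa [uf_zero] using cont_uf.tendsto 0

lemma vf_tendsto : Tendsto vf (nhds 0) (nhds 0) := by
  simpa [vf_zero] using cont_vf.tendsto 0

lemma uf_ne_zero {x : ℝ} (hx : x ≠ 0) : uf x ≠ 0 := by
  simp [uf, Real.arctan_eq_zero_iff, Real.arcsin_eq_zero_iff, hx]

lemma uf_slope : Tendsto (fun x => uf x / x) (nhdsWithin 0 {0}ᶜ) (nhds 1) := by
  have h1 : HasDerivAt Real.arcsin (1 / Real.sqrt (1 - (0:ℝ) ^ 2)) 0 :=
    Real.hasDerivAt_arcsin (by norm_num) (by norm_num)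
  have h2 : HasDerivAt Real.arctan (1 / (1 + Real.arcsin 0 ^ 2)) (Real.arcsin 0) :=
    Real.hasDerivAt_arctan _
  have h3 : HasDerivAt uf (1 / (1 + Real.arcsin 0 ^ 2) * (1 / Real.sqrt (1 - (0:ℝ) ^ 2))) 0 :=
    h2.comp 0 h1
  simp only [Real.arcsin_zero] at h3
  norm_num at h3
  have := hasDerivAt_iff_tendsto_slope.mp h3
  apply this.congr
  intro x
  simp [slope_def_field, uf_zero, div_eq_div_iff]

lemma sin_tan_uf {x : ℝ} (hx : |x| < 1) : Real.sin (Real.tan (uf x)) = x := by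
  have := abs_lt.mp hx
  rw [uf, Real.tan_arctan, Real.sin_arcsin (by linarith) (by linarith)]

lemma tan_sin_vf {x : ℝ} (hx : |x| < 1) : Real.tan (Real.sin (vf x)) = x := by
  have h := abs_lt.mp hx
  have hpi := Real.pi_lt_d2
  have h1 : Real.arctan x ≤ 1 := by
    have := Real.arctan_strictMono.monotone h.2.le
    rw [Real.arctan_one] at this
    linarith
  have h2 : -1 ≤ Real.arctan x := by
    have := Real.arctan_strictMono.monotone h.1.le
    rw [Real.arctan_neg, Real.arctan_one] at this
    linarith
  rw [vf, Real.sin_arcsin h2 h1, Real.tan_arctan]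

lemma cont_Gf : Continuous Gf :=
  continuous_iff_continuousAt.mpr fun t => (hasDerivAt_Gf t).continuousAt

lemma exists_rep : ∃ (k : ℕ) (g : ℝ → ℝ), AnalyticAt ℝ g 0 ∧ g 0 ≠ 0 ∧
    ∀ᶠ z in nhds (0:ℝ), Nf z = z ^ k * g z := by
  obtain ⟨k, g, hg, hg0, heq⟩ :=
    (analyticAt_Nf (x := 0) (by norm_num [Real.cos_zero])).exists_eventuallyEq_pow_smul_nonzero_iff.mpr
      Nf_not_ev_zero
  exact ⟨k, g, hg, hg0, by filter_upwards [heq] with z hz; simpa [smul_eq_mul] using hz⟩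

theorem stmt_10' :
    Filter.Tendsto (fun x : ℝ => Nf x / (vf x - uf x)) (nhdsWithin 0 {0}ᶜ) (nhds 1) := by
  obtain ⟨k, g, hg, hg0, heq⟩ := exists_rep
  have hx_ne : ∀ᶠ x in nhdsWithin (0:ℝ) {0}ᶜ, x ≠ 0 := by
    filter_upwards [self_mem_nhdsWithin] with x hx
    simpa using hx
  have habs : ∀ᶠ x in nhdsWithin (0:ℝ) {0}ᶜ, |x| < 1 := by
    apply Filter.Eventually.filter_mono nhdsWithin_le_nhds
    have : Tendsto (fun x : ℝ => |x|) (nhds 0) (nhds 0) := by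
      simpa using continuous_abs.tendsto (0:ℝ)
    exact this.eventually_lt_const one_pos
  have hgne : ∀ᶠ z in nhds (0:ℝ), g z ≠ 0 := hg.continuousAt.eventually_ne hg0
  have hu_rep : ∀ᶠ x in nhdsWithin (0:ℝ) {0}ᶜ,
      Nf (uf x) = uf x ^ k * g (uf x) ∧ g (uf x) ≠ 0 :=
    (uf_tendsto.eventually (heq.and hgne)).filter_mono nhdsWithin_le_nhds
  have hNu_ne : ∀ᶠ x in nhdsWithin (0:ℝ) {0}ᶜ, Nf (uf x) ≠ 0 := by
    filter_upwards [hx_ne, hu_rep] with x hx ⟨h1, h2⟩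
    rw [h1]
    exact mul_ne_zero (pow_ne_zero _ (uf_ne_zero hx)) h2
  -- T2 : the MVT factor
  have T2 : Tendsto (fun x => Nf (uf x) / (vf x - uf x)) (nhdsWithin (0:ℝ) {0}ᶜ) (nhds 1) := by
    rw [Metric.tendsto_nhds]
    intro ε hε
    obtain ⟨δ, hδ, hball⟩ := Metric.continuousAt_iff.mp contGf'.continuousAt ε hε
    rw [Gf'_zero] at hball
    have hu_small : ∀ᶠ x in nhdsWithin (0:ℝ) {0}ᶜ, dist (uf x) 0 < δ :=
      (uf_tendsto.eventually (Metric.ball_mem_nhds 0 hδ)).filter_mono nhdsWithin_le_nhds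
    have hv_small : ∀ᶠ x in nhdsWithin (0:ℝ) {0}ᶜ, dist (vf x) 0 < δ :=
      (vf_tendsto.eventually (Metric.ball_mem_nhds 0 hδ)).filter_mono nhdsWithin_le_nhds
    filter_upwards [habs, hu_small, hv_small, hNu_ne] with x h1 hu hv hN
    have hGb : Gf (vf x) = x := tan_sin_vf h1
    have hNa : Nf (uf x) = x - Gf (uf x) := by
      simp only [Nf, Gf, sin_tan_uf h1]
    have hne : vf x ≠ uf x := by
      intro hh
      have hGu : Gf (uf x) = x := by rw [← hh]; exact hGb
      exact hN (by rw [hNa, hGu, sub_self])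
    rw [Real.dist_eq] at hu hv
    have hd : ∀ ξ : ℝ, ξ ∈ Set.Ioo (min (uf x) (vf x)) (max (uf x) (vf x)) →
        dist (Gf' ξ) 1 < ε := by
      intro ξ hξ
      apply hball
      rw [Real.dist_eq, sub_zero]
      rcases hξ with ⟨ha, hb⟩
      rcases abs_lt.mp hu with ⟨hu1, hu2⟩
      rcases abs_lt.mp hv with ⟨hv1, hv2⟩
      rw [abs_lt]
      constructor
      · rcases le_total (uf x) (vf x) with h | h <;>
          simp [min_eq_left, min_eq_right, h] at ha <;> linarith
      · rcases le_total (uf x) (vf x) with h | h <;>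
          simp [max_eq_right, max_eq_left, h] at hb <;> linarith
    rcases lt_or_gt_of_ne hne with hlt | hlt
    · -- vf x < uf x
      obtain ⟨ξ, hξ, hξeq⟩ := exists_hasDerivAt_eq_slope Gf Gf' hlt
        (cont_Gf.continuousOn) (fun y _ => hasDerivAt_Gf y)
      have : Gf' ξ = Nf (uf x) / (vf x - uf x) := by
        rw [hξeq, hGb, hNa, ← neg_div_neg_eq, neg_sub, neg_sub]
      rw [← this]
      apply hd
      simp only [min_eq_right hlt.le, max_eq_left hlt.le]
      exact hξ
    · -- uf x < vf x
      obtain ⟨ξ, hξ, hξeq⟩ := exists_hasDerivAt_eq_slope Gf Gf' hlt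
        (cont_Gf.continuousOn) (fun y _ => hasDerivAt_Gf y)
      have : Gf' ξ = Nf (uf x) / (vf x - uf x) := by
        rw [hξeq, hGb, hNa]
      rw [← this]
      apply hd
      simp only [min_eq_left hlt.le, max_eq_right hlt.le]
      exact hξ
  -- T1 : Nf x / Nf (uf x) → 1
  have hquot : Tendsto (fun x => x / uf x) (nhdsWithin (0:ℝ) {0}ᶜ) (nhds 1) := by
    have := uf_slope.inv₀ one_ne_zero
    norm_num at this
    exact this
  have hgx : Tendsto (fun x => g x) (nhdsWithin (0:ℝ) {0}ᶜ) (nhds (g 0)) :=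
    (hg.continuousAt.tendsto).mono_left nhdsWithin_le_nhds
  have hgu : Tendsto (fun x => g (uf x)) (nhdsWithin (0:ℝ) {0}ᶜ) (nhds (g 0)) :=
    (hg.continuousAt.tendsto.comp uf_tendsto).mono_left nhdsWithin_le_nhds
  have T1 : Tendsto (fun x => Nf x / Nf (uf x)) (nhdsWithin (0:ℝ) {0}ᶜ) (nhds 1) := by
    have hmain : Tendsto (fun x => (x / uf x) ^ k * (g x / g (uf x)))
        (nhdsWithin (0:ℝ) {0}ᶜ) (nhds 1) := by
      have := (hquot.pow k).mul (hgx.div hgu hg0)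
      simpa [div_self hg0] using this
    apply hmain.congr'
    filter_upwards [heq.filter_mono nhdsWithin_le_nhds, hgne.filter_mono nhdsWithin_le_nhds,
      hu_rep] with x hx hgx' ⟨hux, hgu'⟩
    rw [hx, hux, div_pow, div_mul_div_comm]
  -- combine
  have := T1.mul T2
  rw [one_mul] at this
  apply this.congr'
  filter_upwards [hNu_ne] with x hN
  exact div_mul_div_cancel₀ hN

theorem stmt_10 :
    Filter.Tendsto
      (fun x : ℝ =>
        (Real.sin (Real.tan x) - Real.tan (Real.sin x)) /
          (Real.arcsin (Real.arctan x) - Real.arctan (Real.arcsin x)))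
      (nhdsWithin 0 {0}ᶜ) (nhds 1) := by
  exact stmt_10'
end

section
/- As x → 0 with x ≠ 0, (sin(tan x) − tan(sin x)) / x^7 tends to −1/30. -/
open Real Filter Asymptotics Nat

noncomputable def Spoly (y : ℝ) : ℝ := y - y^3/6 + y^5/120 - y^7/5040
noncomputable def Cpoly (y : ℝ) : ℝ := 1 - y^2/2 + y^4/24 - y^6/720
noncomputable def Ppoly (y : ℝ) : ℝ := y + y^3/3 + 2*y^5/15 + 17*y^7/315
noncomputable def Qpoly (x : ℝ) : ℝ := -331/15120 + (13/6300)*x^2 - (17/226800)*x^4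
noncomputable def Gpoly (x : ℝ) : ℝ :=
  (-1/30) +
  (-29/756) * x ^ 2 +
  (-14267/302400) * x ^ 4 +
  (1889/362880) * x ^ 6 +
  (-1952317/762048000) * x ^ 8 +
  (165377/101606400) * x ^ 10 +
  (14363203/27433728000) * x ^ 12 +
  (86575319/384072192000) * x ^ 14 +
  (46122977/960180480000) * x ^ 16 +
  (-230943421/115221657600000) * x ^ 18 +
  (-4411819403/576108288000000) * x ^ 20 +
  (-4954854589/1075402137600000) * x ^ 22 +
  (-5675457516527/2903585771520000000) * x ^ 24 +
  (-776379118091/1161434308608000000) * x ^ 26 +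
  (-159492145985209/813004016025600000000) * x ^ 28 +
  (-6954577460549/139372117032960000000) * x ^ 30 +
  (-107249555048039/9756048192307200000000) * x ^ 32 +
  (-2748502750001/1300806425640960000000) * x ^ 34 +
  (-24129856177877/70243546984611840000000) * x ^ 36 +
  (-44598669076771/983409657784565760000000) * x ^ 38 +
  (-4999521096641/1092677397538406400000000) * x ^ 40 +
  (-109275246826577/413032056269517619200000000) * x ^ 42

noncomputable def rS (a b : ℝ) : ℝ :=
  1 - (a^2 + a*b + b^2)/6 + (a^4 + a^3*b + a^2*b^2 + a*b^3 + b^4)/120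
    - (a^6 + a^5*b + a^4*b^2 + a^3*b^3 + a^2*b^4 + a*b^5 + b^6)/5040

noncomputable def rP (a b : ℝ) : ℝ :=
  1 + (a^2 + a*b + b^2)/3 + 2*(a^4 + a^3*b + a^2*b^2 + a*b^3 + b^4)/15
    + 17*(a^6 + a^5*b + a^4*b^2 + a^3*b^3 + a^2*b^4 + a*b^5 + b^6)/315

theorem key_identity (x : ℝ) : Spoly (Ppoly x) - Ppoly (Spoly x) = x ^ 7 * Gpoly x := by
  unfold Spoly Ppoly Gpoly; ring

theorem rS_identity (a b : ℝ) : Spoly a - Spoly b = (a - b) * rS a b := by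
  unfold Spoly rS; ring

theorem rP_identity (a b : ℝ) : Ppoly a - Ppoly b = (a - b) * rP a b := by
  unfold Ppoly rP; ring

theorem Q_identity (x : ℝ) : Cpoly x * Ppoly x - Spoly x = x ^ 9 * Qpoly x := by
  unfold Cpoly Ppoly Spoly Qpoly; ring

theorem two_pow_le_fact (n m : ℕ) (h : n + 1 ≤ m) : (2:ℝ)^n ≤ (m)! := by
  have h1 : 2 ^ n ≤ (n + 1)! := by
    have h2 := @Nat.factorial_mul_pow_le_factorial 1 n
    simpa [Nat.factorial_one, Nat.add_comm] using h2
  have h2 : (n + 1)! ≤ (m)! := Nat.factorial_le h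
  exact_mod_cast h1.trans h2

theorem sin_tail (x : ℝ) (hx : |x| ≤ 1) : |Real.sin x - Spoly x| ≤ 2 * |x| ^ 9 := by
  set f : ℕ → ℝ := fun n => (-1) ^ n * x ^ (2 * n + 1) / ↑(2 * n + 1)! with hf
  have h := Real.hasSum_sin x
  have hpart : ∑ n ∈ Finset.range 4, f n = Spoly x := by
    simp [hf, Finset.sum_range_succ, Spoly, Nat.factorial]
    norm_num
    ring
  have htail : HasSum (fun n => f (n + 4)) (Real.sin x - Spoly x) := by
    rw [hasSum_nat_add_iff]
    rw [hpart, sub_add_cancel]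
    exact h
  have hb : ∀ n, |f (n + 4)| ≤ |x| ^ 9 * (1/2) ^ n := by
    intro n
    have he : |f (n + 4)| = |x| ^ (2 * (n + 4) + 1) / ↑(2 * (n + 4) + 1)! := by
      rw [hf]
      simp [abs_div, abs_mul, abs_pow, abs_neg, Nat.abs_cast]
    rw [he]
    have hnum : |x| ^ (2 * (n + 4) + 1) ≤ |x| ^ 9 :=
      pow_le_pow_of_le_one (abs_nonneg x) hx (by omega)
    have hden : (2:ℝ) ^ n ≤ ↑(2 * (n + 4) + 1)! := two_pow_le_fact n _ (by omega)
    have h2 : |x| ^ 9 * (1/2:ℝ) ^ n = |x| ^ 9 / 2 ^ n := by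
      rw [one_div, inv_pow, div_eq_mul_inv]
    rw [h2]
    gcongr
  have hgs : Summable (fun n : ℕ => |x| ^ 9 * (1/2:ℝ) ^ n) :=
    (summable_geometric_of_lt_one (by norm_num) (by norm_num)).mul_left _
  have hsum : Summable fun n => |f (n + 4)| :=
    Summable.of_nonneg_of_le (fun n => abs_nonneg _) hb hgs
  calc |Real.sin x - Spoly x| = |∑' n, f (n + 4)| := by rw [htail.tsum_eq]
    _ ≤ ∑' n, |f (n + 4)| := by
        simpa using norm_tsum_le_tsum_norm (f := fun n => f (n + 4)) (by simpa using hsum)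
    _ ≤ ∑' n, |x| ^ 9 * (1/2:ℝ) ^ n := Summable.tsum_le_tsum hb hsum hgs
    _ = |x| ^ 9 * 2 := by rw [tsum_mul_left, tsum_geometric_two]
    _ = 2 * |x| ^ 9 := by ring

theorem cos_tail (x : ℝ) (hx : |x| ≤ 1) : |Real.cos x - Cpoly x| ≤ 2 * |x| ^ 8 := by
  set f : ℕ → ℝ := fun n => (-1) ^ n * x ^ (2 * n) / ↑(2 * n)! with hf
  have h := Real.hasSum_cos x
  have hpart : ∑ n ∈ Finset.range 4, f n = Cpoly x := by
    simp [hf, Finset.sum_range_succ, Cpoly, Nat.factorial]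
    norm_num
    ring
  have htail : HasSum (fun n => f (n + 4)) (Real.cos x - Cpoly x) := by
    rw [hasSum_nat_add_iff]
    rw [hpart, sub_add_cancel]
    exact h
  have hb : ∀ n, |f (n + 4)| ≤ |x| ^ 8 * (1/2) ^ n := by
    intro n
    have he : |f (n + 4)| = |x| ^ (2 * (n + 4)) / ↑(2 * (n + 4))! := by
      rw [hf]
      simp [abs_div, abs_mul, abs_pow, abs_neg, Nat.abs_cast]
    rw [he]
    have hnum : |x| ^ (2 * (n + 4)) ≤ |x| ^ 8 :=
      pow_le_pow_of_le_one (abs_nonneg x) hx (by omega)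
    have hden : (2:ℝ) ^ n ≤ ↑(2 * (n + 4))! := two_pow_le_fact n _ (by omega)
    have h2 : |x| ^ 8 * (1/2:ℝ) ^ n = |x| ^ 8 / 2 ^ n := by
      rw [one_div, inv_pow, div_eq_mul_inv]
    rw [h2]
    gcongr
  have hgs : Summable (fun n : ℕ => |x| ^ 8 * (1/2:ℝ) ^ n) :=
    (summable_geometric_of_lt_one (by norm_num) (by norm_num)).mul_left _
  have hsum : Summable fun n => |f (n + 4)| :=
    Summable.of_nonneg_of_le (fun n => abs_nonneg _) hb hgs
  calc |Real.cos x - Cpoly x| = |∑' n, f (n + 4)| := by rw [htail.tsum_eq]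
    _ ≤ ∑' n, |f (n + 4)| := by
        simpa using norm_tsum_le_tsum_norm (f := fun n => f (n + 4)) (by simpa using hsum)
    _ ≤ ∑' n, |x| ^ 8 * (1/2:ℝ) ^ n := Summable.tsum_le_tsum hb hsum hgs
    _ = |x| ^ 8 * 2 := by rw [tsum_mul_left, tsum_geometric_two]
    _ = 2 * |x| ^ 8 := by ring

theorem habs1 : ∀ᶠ y : ℝ in nhds 0, |y| ≤ 1 := by
  filter_upwards [Metric.ball_mem_nhds (0:ℝ) one_pos] with y hy
  rw [Metric.mem_ball, Real.dist_eq, sub_zero] at hy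
  exact hy.le

theorem hs_littleO : (fun y : ℝ => Real.sin y - Spoly y) =o[nhds 0] fun y => y ^ 7 := by
  have h1 : (fun y : ℝ => Real.sin y - Spoly y) =O[nhds 0] fun y => y ^ 9 := by
    rw [isBigO_iff]
    refine ⟨2, ?_⟩
    filter_upwards [habs1] with y hy
    simpa [abs_pow] using sin_tail y hy
  exact h1.trans_isLittleO (isLittleO_pow_pow (by norm_num))

theorem hc_littleO : (fun y : ℝ => Real.cos y - Cpoly y) =o[nhds 0] fun y => y ^ 7 := by
  have h1 : (fun y : ℝ => Real.cos y - Cpoly y) =O[nhds 0] fun y => y ^ 8 := by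
    rw [isBigO_iff]
    refine ⟨2, ?_⟩
    filter_upwards [habs1] with y hy
    simpa [abs_pow] using cos_tail y hy
  exact h1.trans_isLittleO (isLittleO_pow_pow (by norm_num))

theorem tendsto_Ppoly : Tendsto Ppoly (nhds 0) (nhds 0) := by
  have h : Continuous Ppoly := by unfold Ppoly; continuity
  simpa [Ppoly] using h.tendsto 0

theorem tendsto_Spoly : Tendsto Spoly (nhds 0) (nhds 0) := by
  have h : Continuous Spoly := by unfold Spoly; continuity
  simpa [Spoly] using h.tendsto 0

theorem htan_littleO : (fun y : ℝ => Real.tan y - Ppoly y) =o[nhds 0] fun y => y ^ 7 := by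
  have hP1 : (fun y : ℝ => Ppoly y) =O[nhds 0] (fun _ => (1:ℝ)) :=
    tendsto_Ppoly.isBigO_one ℝ
  have hQ1 : (fun y : ℝ => Qpoly y) =O[nhds 0] (fun _ => (1:ℝ)) := by
    have h : Continuous Qpoly := by unfold Qpoly; continuity
    exact (h.tendsto 0).isBigO_one ℝ
  have hx2 : (fun y : ℝ => y ^ 9 * Qpoly y) =o[nhds 0] fun y => y ^ 7 := by
    have := (isLittleO_pow_pow (show 7 < 9 by norm_num)
      (𝕜 := ℝ)).mul_isBigO hQ1
    simpa using this
  have hcp : (fun y : ℝ => (Real.cos y - Cpoly y) * Ppoly y) =o[nhds 0] fun y => y ^ 7 := by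
    have := hc_littleO.mul_isBigO hP1
    simpa using this
  have hA : (fun y : ℝ => Real.sin y - Real.cos y * Ppoly y) =o[nhds 0] fun y => y ^ 7 := by
    have he : (fun y : ℝ => Real.sin y - Real.cos y * Ppoly y)
        = fun y => (Real.sin y - Spoly y) - (Real.cos y - Cpoly y) * Ppoly y
          - y ^ 9 * Qpoly y := by
      funext y
      linear_combination - Q_identity y
    rw [he]
    exact (hs_littleO.sub hcp).sub hx2
  have hcosne : ∀ᶠ y : ℝ in nhds 0, Real.cos y ≠ 0 := by
    have h : Tendsto Real.cos (nhds 0) (nhds 1) := by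
      simpa using Real.continuous_cos.tendsto 0
    exact h.eventually_ne one_ne_zero
  have hinv : (fun y : ℝ => (Real.cos y)⁻¹) =O[nhds 0] (fun _ => (1:ℝ)) := by
    have h : Tendsto Real.cos (nhds 0) (nhds 1) := by
      simpa using Real.continuous_cos.tendsto 0
    exact (h.inv₀ one_ne_zero).isBigO_one ℝ
  have hmul := hA.mul_isBigO hinv
  refine hmul.congr' ?_ (Filter.Eventually.of_forall fun y => by ring)
  filter_upwards [hcosne] with y hy
  rw [Real.tan_eq_sin_div_cos]
  field_simp

theorem tendsto_tan0 : Tendsto Real.tan (nhds 0) (nhds 0) := by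
  have h : ContinuousAt Real.tan 0 := Real.continuousAt_tan.mpr (by simp)
  simpa [Real.tan_zero] using h.tendsto

theorem tan_bigO : Real.tan =O[nhds 0] fun x : ℝ => x := by
  have h := (Real.hasDerivAt_tan (x := 0) (by simp)).differentiableAt.isBigO_sub
  simpa [Real.tan_zero] using h

theorem sin_bigO : Real.sin =O[nhds 0] fun x : ℝ => x := by
  have h := (Real.differentiable_sin 0).isBigO_sub
  simpa [Real.sin_zero] using h

theorem h1_littleO :
    (fun x : ℝ => Real.sin (Real.tan x) - Spoly (Ppoly x)) =o[nhds 0] fun x => x ^ 7 := by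
  have ha : (fun x : ℝ => Real.sin (Real.tan x) - Spoly (Real.tan x))
      =o[nhds 0] fun x => x ^ 7 := by
    have := (hs_littleO.comp_tendsto tendsto_tan0).trans_isBigO (tan_bigO.pow 7)
    simpa [Function.comp_def] using this
  have hR : (fun x : ℝ => rS (Real.tan x) (Ppoly x)) =O[nhds 0] (fun _ => (1:ℝ)) := by
    have hc : Continuous fun p : ℝ × ℝ => rS p.1 p.2 := by unfold rS; continuity
    have ht : Tendsto (fun x : ℝ => (Real.tan x, Ppoly x)) (nhds 0) (nhds (0, 0)) :=
      tendsto_tan0.prodMk_nhds tendsto_Ppoly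
    exact ((hc.tendsto (0, 0)).comp ht).isBigO_one ℝ
  have hb : (fun x : ℝ => Spoly (Real.tan x) - Spoly (Ppoly x))
      =o[nhds 0] fun x => x ^ 7 := by
    have he : (fun x : ℝ => Spoly (Real.tan x) - Spoly (Ppoly x))
        = fun x => (Real.tan x - Ppoly x) * rS (Real.tan x) (Ppoly x) := by
      funext x; exact rS_identity _ _
    rw [he]
    simpa using htan_littleO.mul_isBigO hR
  have := ha.add hb
  simpa using this

theorem h2_littleO :
    (fun x : ℝ => Real.tan (Real.sin x) - Ppoly (Spoly x)) =o[nhds 0] fun x => x ^ 7 := by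
  have hsin0 : Tendsto Real.sin (nhds 0) (nhds 0) := by
    simpa using Real.continuous_sin.tendsto 0
  have ha : (fun x : ℝ => Real.tan (Real.sin x) - Ppoly (Real.sin x))
      =o[nhds 0] fun x => x ^ 7 := by
    have := (htan_littleO.comp_tendsto hsin0).trans_isBigO (sin_bigO.pow 7)
    simpa [Function.comp_def] using this
  have hR : (fun x : ℝ => rP (Real.sin x) (Spoly x)) =O[nhds 0] (fun _ => (1:ℝ)) := by
    have hc : Continuous fun p : ℝ × ℝ => rP p.1 p.2 := by unfold rP; continuity
    have ht : Tendsto (fun x : ℝ => (Real.sin x, Spoly x)) (nhds 0) (nhds (0, 0)) :=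
      hsin0.prodMk_nhds tendsto_Spoly
    exact ((hc.tendsto (0, 0)).comp ht).isBigO_one ℝ
  have hb : (fun x : ℝ => Ppoly (Real.sin x) - Ppoly (Spoly x))
      =o[nhds 0] fun x => x ^ 7 := by
    have he : (fun x : ℝ => Ppoly (Real.sin x) - Ppoly (Spoly x))
        = fun x => (Real.sin x - Spoly x) * rP (Real.sin x) (Spoly x) := by
      funext x; exact rP_identity _ _
    rw [he]
    simpa using hs_littleO.mul_isBigO hR
  have := ha.add hb
  simpa using this

theorem stmt_11 :
    Filter.Tendsto
      (fun x : ℝ => (Real.sin (Real.tan x) - Real.tan (Real.sin x)) / x ^ 7)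
      (nhdsWithin 0 {0}ᶜ) (nhds (-1 / 30)) := by
  have hE : (fun x : ℝ => Real.sin (Real.tan x) - Real.tan (Real.sin x) - x ^ 7 * Gpoly x)
      =o[nhds 0] fun x => x ^ 7 := by
    have he : (fun x : ℝ => Real.sin (Real.tan x) - Real.tan (Real.sin x) - x ^ 7 * Gpoly x)
        = fun x => (Real.sin (Real.tan x) - Spoly (Ppoly x))
            - (Real.tan (Real.sin x) - Ppoly (Spoly x)) := by
      funext x
      linear_combination key_identity x
    rw [he]
    exact h1_littleO.sub h2_littleO
  have hdiv : Tendsto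
      (fun x : ℝ => (Real.sin (Real.tan x) - Real.tan (Real.sin x) - x ^ 7 * Gpoly x) / x ^ 7)
      (nhds 0) (nhds 0) := hE.tendsto_div_nhds_zero
  have hG : Tendsto Gpoly (nhds 0) (nhds (-1 / 30)) := by
    have hc : Continuous Gpoly := by unfold Gpoly; continuity
    have h0 : Gpoly 0 = -1 / 30 := by unfold Gpoly; norm_num
    simpa [h0] using hc.tendsto 0
  have hsum : Tendsto
      (fun x : ℝ => (Real.sin (Real.tan x) - Real.tan (Real.sin x) - x ^ 7 * Gpoly x) / x ^ 7
        + Gpoly x) (nhdsWithin 0 {0}ᶜ) (nhds (-1 / 30)) := by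
    have h0 : Tendsto
        (fun x : ℝ => (Real.sin (Real.tan x) - Real.tan (Real.sin x) - x ^ 7 * Gpoly x) / x ^ 7
          + Gpoly x) (nhds 0) (nhds (0 + -1 / 30)) := hdiv.add hG
    simpa using h0.mono_left nhdsWithin_le_nhds
  refine hsum.congr' ?_
  filter_upwards [self_mem_nhdsWithin] with x hx
  have hx7 : x ^ 7 ≠ 0 := pow_ne_zero 7 (by simpa using hx)
  field_simp
  have h1 : x ^ 7 * x⁻¹ ^ 7 = 1 := by
    rw [← mul_pow, mul_inv_cancel₀ (by simpa using hx), one_pow]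
  linear_combination (-(Gpoly x)) * h1
end
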